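/- Let R¹_{m,n} = (z₁w₁)^m (z₂w₂)^n (I z₁ ∂/∂z₁ − I w₁ ∂/∂w₁) and R²_{i,j} = (z₁w₁)^i (z₂w₂)^j (I z₂ ∂/∂z₂ − I w₂ ∂/∂w₂) be planar-rotating vector fields on ℂ⁴. Then for all k, l ∈ {1,2} and all m, n, i, j ≥ 0, the Lie bracket [R^k_{m,n}, R^l_{i,j}] = 0; i.e., the rotating vector fields span an abelian subalgebra. -/
import Mathlib


open MvPolynomial

/-- Polynomials on ℂ⁴ with coordinates (z₁, w₁, z₂, w₂). -/
abbrev Poly4 : Type := MvPolynomial (Fin 4) ℂ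

/-- Polynomial vector fields on ℂ⁴, identified with their component polynomials. -/
abbrev VF : Type := Fin 4 → Poly4

/-- Action of a vector field on a polynomial (as a derivation). -/
noncomputable def vAct (v : VF) (p : Poly4) : Poly4 := ∑ i, v i * pderiv i p

/-- Lie bracket of vector fields, [v,w] = vw − wv as differential operators. -/
noncomputable def vBr (v w : VF) : VF := fun k => vAct v (w k) - vAct w (v k)

/-- The monomial (z₁w₁)^m (z₂w₂)^n, i.e. |z₁|^{2m}|z₂|^{2n}. -/
noncomputable def mon (m n : ℕ) : Poly4 := (X 0 * X 1) ^ m * (X 2 * X 3) ^ n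

/-- Planar-radial vector field P¹_{m,n} = (z₁w₁)^m (z₂w₂)^n (z₁ ∂/∂z₁ + w₁ ∂/∂w₁). -/
noncomputable def P1 (m n : ℕ) : VF := fun k => mon m n * ![X 0, X 1, 0, 0] k

/-- Planar-radial vector field P²_{m,n} = (z₁w₁)^m (z₂w₂)^n (z₂ ∂/∂z₂ + w₂ ∂/∂w₂). -/
noncomputable def P2 (m n : ℕ) : VF := fun k => mon m n * ![0, 0, X 2, X 3] k

/-- Planar-rotating vector field R¹_{m,n} = (z₁w₁)^m (z₂w₂)^n (I z₁ ∂/∂z₁ − I w₁ ∂/∂w₁). -/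
noncomputable def R1 (m n : ℕ) : VF :=
  fun k => mon m n * ![C Complex.I * X 0, -(C Complex.I) * X 1, 0, 0] k

/-- Planar-rotating vector field R²_{m,n} = (z₁w₁)^m (z₂w₂)^n (I z₂ ∂/∂z₂ − I w₂ ∂/∂w₂). -/
noncomputable def R2 (m n : ℕ) : VF :=
  fun k => mon m n * ![0, 0, C Complex.I * X 2, -(C Complex.I) * X 3] k

/-- The family of rotating vector fields, indexed by k ∈ {1,2}. -/
noncomputable def Rk : Fin 2 → ℕ → ℕ → VF := ![R1, R2]

/-- [R^k_{m,n}, R^l_{i,j}] = 0 for all k, l ∈ {1,2}: the rotating vector fields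
span an abelian subalgebra. -/
theorem bracket_R_R (k l : Fin 2) (m n i j : ℕ) :
    vBr (Rk k m n) (Rk l i j) = 0 := by
  funext a
  fin_cases k <;> fin_cases l <;> fin_cases a <;>
    simp [vBr, vAct, Rk, R1, R2, mon, Fin.sum_univ_four, pderiv_X, Pi.single_apply,
      pderiv_mul, pderiv_pow, Derivation.leibniz, Derivation.leibniz_pow] <;> ring
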